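/- Let P be a finite nonempty set of points in the upper half-plane and let D* be a smallest disk centered on the x-axis enclosing P, with radius r*. Then the boundary circle of D* contains at least one point of P; moreover, either some point of P equals the apex (c, r*) of D* (where (c,0) is the center), or the boundary contains two points of P, one with x-coordinate ≤ c and one with x-coordinate ≥ c. -/

import Mathlib

noncomputable def pt (x y : ℝ) : EuclideanSpace ℝ (Fin 2) := !₂[x, y]
lemma dist_pt_eq (p : EuclideanSpace ℝ (Fin 2)) (a b : ℝ) :
    dist p (pt a b) = Real.sqrt ((p 0 - a)^2 + (p 1 - b)^2) := by
  rw [EuclideanSpace.dist_eq, Fin.sum_univ_two]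
  simp [pt, Real.dist_eq, sq_abs]
lemma shift (P : Finset (EuclideanSpace ℝ (Fin 2))) (hPne : P.Nonempty)
    (c r : ℝ)
    (hcov : ∀ p ∈ P, dist p (pt c 0) ≤ r)
    (σ : ℝ) (hσ : σ = 1 ∨ σ = -1)
    (hb : ∀ p ∈ P, dist p (pt c 0) = r → 0 < σ * (p 0 - c)) :
    ∃ c' r', 0 ≤ r' ∧ r' < r ∧ ∀ p ∈ P, dist p (pt c' 0) ≤ r' := by
  classical
  set f : EuclideanSpace ℝ (Fin 2) → ℝ :=
    fun p => if dist p (pt c 0) = r then σ * (p 0 - c) else r - dist p (pt c 0) with hf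
  have hfpos : ∀ p ∈ P, 0 < f p := by
    intro p hp
    simp only [hf]
    split
    · exact hb p hp ‹_›
    · have := (hcov p hp).lt_of_ne ‹_›
      linarith
  set m := P.inf' hPne f with hm
  have hmpos : 0 < m := by
    rw [hm, Finset.lt_inf'_iff]
    exact hfpos
  set ε := m / 2 with hε
  have hεpos : 0 < ε := by positivity
  refine ⟨c + σ * ε, P.sup' hPne (fun p => dist p (pt (c + σ * ε) 0)), ?_, ?_, ?_⟩
  · obtain ⟨q, hq⟩ := hPne
    exact le_trans dist_nonneg (Finset.le_sup' (fun p => dist p (pt (c + σ * ε) 0)) hq)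
  · rw [Finset.sup'_lt_iff]
    intro p hp
    have hfp : m ≤ f p := Finset.inf'_le f hp
    by_cases hd : dist p (pt c 0) = r
    · have h1 : (p 0 - c)^2 + (p 1)^2 = r^2 := by
        rw [dist_pt_eq] at hd
        have hnn : 0 ≤ (p 0 - c)^2 + (p 1 - 0)^2 := by positivity
        have h2 := congrArg (·^2) hd
        simp only [Real.sq_sqrt hnn] at h2
        simpa using h2
      have hεlt : ε < σ * (p 0 - c) := by
        have h3 : f p = σ * (p 0 - c) := by simp [hf, hd]
        rw [h3] at hfp
        linarith
      have hσσ : σ * σ = 1 := by rcases hσ with h | h <;> simp [h]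
      have hσε : (σ*ε)^2 = ε^2 := by linear_combination ε^2 * hσσ
      have hmul : ε*ε < ε*(σ*(p 0 - c)) := mul_lt_mul_of_pos_left hεlt hεpos
      have key : (p 0 - (c + σ * ε))^2 + (p 1 - 0)^2 < r^2 := by nlinarith [hσε, hmul, h1, hεpos]
      have hrnn : 0 ≤ r := le_trans dist_nonneg (hcov p hp)
      rw [dist_pt_eq]
      calc Real.sqrt ((p 0 - (c + σ * ε))^2 + (p 1 - 0)^2)
          < Real.sqrt (r^2) := Real.sqrt_lt_sqrt (by positivity) key
        _ = r := Real.sqrt_sq hrnn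
    · have hlt : dist p (pt c 0) < r := (hcov p hp).lt_of_ne hd
      have hεlt : ε < r - dist p (pt c 0) := by
        have h3 : f p = r - dist p (pt c 0) := by simp [hf, hd]
        rw [h3] at hfp
        linarith
      have hd2 : dist (pt c 0) (pt (c + σ * ε) 0) = ε := by
        rw [dist_pt_eq]
        have h0 : (pt c 0) 0 = c := by simp [pt]
        have h1 : (pt c 0) 1 = (0:ℝ) := by simp [pt]
        rw [h0, h1]
        rcases hσ with h | h <;>
          simp [h, Real.sqrt_sq_eq_abs, abs_of_pos hεpos, abs_of_neg (by linarith : -ε < 0)]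
      calc dist p (pt (c + σ * ε) 0)
          ≤ dist p (pt c 0) + dist (pt c 0) (pt (c + σ * ε) 0) := dist_triangle _ _ _
        _ = dist p (pt c 0) + ε := by rw [hd2]
        _ < r := by linarith
  · intro p hp
    exact Finset.le_sup' (fun p => dist p (pt (c + σ * ε) 0)) hp

/-- A smallest axis-centered disk `D*` (center `(c,0)`, radius `r*`)
enclosing a finite nonempty set `P` of upper half-plane points has a point of `P` on
its boundary; moreover either some point of `P` is the apex `(c, r*)`, or the boundary
contains two points of `P`, one with x-coordinate `≤ c` and one with x-coordinate `≥ c`. -/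
theorem smallest_enclosing_disk_boundary
    (P : Finset (EuclideanSpace ℝ (Fin 2))) (hPne : P.Nonempty)
    (hup : ∀ q ∈ P, 0 ≤ q 1)
    (c r : ℝ) (hr : 0 ≤ r)
    (hcov : (P : Set (EuclideanSpace ℝ (Fin 2))) ⊆ Metric.closedBall (pt c 0) r)
    (hmin : ∀ c' r' : ℝ, 0 ≤ r' →
      (P : Set (EuclideanSpace ℝ (Fin 2))) ⊆ Metric.closedBall (pt c' 0) r' → r ≤ r') :
    (∃ p ∈ P, dist p (pt c 0) = r) ∧
      ((∃ p ∈ P, p = pt c r) ∨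
        ∃ p ∈ P, ∃ q ∈ P, dist p (pt c 0) = r ∧ dist q (pt c 0) = r ∧
          p 0 ≤ c ∧ c ≤ q 0) := by
  classical
  have hcov' : ∀ p ∈ P, dist p (pt c 0) ≤ r := by
    intro p hp
    have := hcov (Finset.mem_coe.mpr hp)
    rwa [Metric.mem_closedBall] at this
  obtain ⟨p₀, hp₀P, hp₀max⟩ := P.exists_max_image (fun p => dist p (pt c 0)) hPne
  have hp₀r : dist p₀ (pt c 0) = r := by
    rcases (hcov' p₀ hp₀P).lt_or_eq with hlt | heq
    · exfalso
      have hsub : (P : Set (EuclideanSpace ℝ (Fin 2))) ⊆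
          Metric.closedBall (pt c 0) (dist p₀ (pt c 0)) := by
        intro q hq
        rw [Metric.mem_closedBall]
        exact hp₀max q (Finset.mem_coe.mp hq)
      have := hmin c (dist p₀ (pt c 0)) dist_nonneg hsub
      linarith
    · exact heq
  refine ⟨⟨p₀, hp₀P, hp₀r⟩, ?_⟩
  by_contra hcon
  push_neg at hcon
  obtain ⟨hnapex, hntwo⟩ := hcon
  -- boundary points have x ≠ c
  have hx : ∀ p ∈ P, dist p (pt c 0) = r → p 0 ≠ c := by
    intro p hp hd hxc
    apply hnapex p hp
    have h1 : (p 0 - c)^2 + (p 1)^2 = r^2 := by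
      rw [dist_pt_eq] at hd
      have hnn : 0 ≤ (p 0 - c)^2 + (p 1 - 0)^2 := by positivity
      have h2 := congrArg (·^2) hd
      simp only [Real.sq_sqrt hnn] at h2
      simpa using h2
    have hsq : (p 1 - r) * (p 1 + r) = 0 := by
      have : (p 1)^2 = r^2 := by rw [hxc] at h1; simpa using h1
      linear_combination this
    have hp1 : p 1 = r := by
      rcases mul_eq_zero.mp hsq with h | h
      · linarith
      · have := hup p hp
        linarith
    ext i
    fin_cases i
    · simpa [pt] using hxc
    · simpa [pt] using hp1
  have hcontra : ∀ σ : ℝ, σ = 1 ∨ σ = -1 →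
      (∀ p ∈ P, dist p (pt c 0) = r → 0 < σ * (p 0 - c)) → False := by
    intro σ hσ hb
    obtain ⟨c', r', hr'0, hr'lt, hcov''⟩ := shift P hPne c r hcov' σ hσ hb
    have hsub : (P : Set (EuclideanSpace ℝ (Fin 2))) ⊆ Metric.closedBall (pt c' 0) r' := by
      intro q hq
      rw [Metric.mem_closedBall]
      exact hcov'' q (Finset.mem_coe.mp hq)
    have := hmin c' r' hr'0 hsub
    linarith
  rcases lt_or_gt_of_ne (hx p₀ hp₀P hp₀r) with hlt | hgt
  · -- p₀ 0 < c : all boundary points have x < c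
    apply hcontra (-1) (Or.inr rfl)
    intro q hq hdq
    have h1 : q 0 < c := hntwo p₀ hp₀P q hq hp₀r hdq (le_of_lt hlt)
    nlinarith
  · -- p₀ 0 > c : all boundary points have x > c
    apply hcontra 1 (Or.inl rfl)
    intro q hq hdq
    have h1 : ¬ (q 0 ≤ c) := by
      intro h
      exact absurd (hntwo q hq p₀ hp₀P hdq hp₀r h) (not_lt.mpr (le_of_lt hgt))
    push_neg at h1
    nlinarith
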